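/- Let G be a connected m-uniform hypergraph that is spectral ℓ-symmetric with ℓ ≥ 2. Then G is m-colorable: there is a map ψ : V(G) → {1,...,m} such that every edge of G contains two vertices receiving different colors. In particular the chromatic number χ(G) ≤ m. -/

import Mathlib

open BigOperators

/-- An order-`m`, dimension-`n` real tensor (hypermatrix). -/
abbrev Tensor (m n : ℕ) : Type := (Fin m → Fin n) → ℝ

/-- The primitive rotation `e^{i·2π/k}` of the complex plane. -/
noncomputable def rot (k : ℕ) : ℂ := Complex.exp (2 * (Real.pi : ℂ) * Complex.I / (k : ℂ))

/-- A tensor is nonnegative if all its entries are nonnegative. -/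
def Tensor.Nonneg {m n : ℕ} (A : Tensor m n) : Prop := ∀ α, 0 ≤ A α

/-- A tensor is symmetric if its entries are invariant under permutations of indices. -/
def Tensor.Symm {m n : ℕ} (A : Tensor m n) : Prop :=
  ∀ (σ : Equiv.Perm (Fin m)) (α : Fin m → Fin n), A (α ∘ σ) = A α

/-- Arc `(i,j)` of the digraph associated to `A`: some entry `a_{i i₂ … i_m} ≠ 0`
with `j` among the later indices. -/
def Tensor.Arc {m n : ℕ} [NeZero m] (A : Tensor m n) (i j : Fin n) : Prop :=
  ∃ α : Fin m → Fin n, A α ≠ 0 ∧ α 0 = i ∧ ∃ k : Fin m, k ≠ 0 ∧ α k = j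

/-- `A` is weakly irreducible if its associated digraph is strongly connected. -/
def Tensor.WeaklyIrreducible {m n : ℕ} [NeZero m] (A : Tensor m n) : Prop :=
  ∀ i j : Fin n, Relation.ReflTransGen A.Arc i j

/-- The eigenvalue equations `(A x^{m-1})_i = λ x_i^{m-1}` for all `i`. -/
def Tensor.EigEq {m n : ℕ} [NeZero m] (A : Tensor m n) (lam : ℂ) (x : Fin n → ℂ) : Prop :=
  ∀ i : Fin n,
    (∑ α : Fin m → Fin n,
      if α 0 = i then (A α : ℂ) * ∏ k ∈ Finset.univ.erase (0 : Fin m), x (α k) else 0)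
    = lam * x i ^ (m - 1)

/-- `lam` is an eigenvalue of the tensor `A`. -/
def Tensor.IsEig {m n : ℕ} [NeZero m] (A : Tensor m n) (lam : ℂ) : Prop :=
  ∃ x : Fin n → ℂ, x ≠ 0 ∧ A.EigEq lam x

/-- `A` is spectral `ℓ`-symmetric: its spectrum is invariant under rotation by `e^{i2π/ℓ}`. -/
def Tensor.SpectralSym {m n : ℕ} [NeZero m] (ℓ : ℕ) (A : Tensor m n) : Prop :=
  ∀ lam : ℂ, A.IsEig lam ↔ A.IsEig (rot ℓ * lam)

/-- `A = e^{-iθ} D^{-(m-1)} A D` for the diagonal matrix `D = diag d`, entrywise. -/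
def Tensor.DiagSim {m n : ℕ} [NeZero m] (A : Tensor m n) (θ : ℝ) (d : Fin n → ℂ) : Prop :=
  ∀ α : Fin m → Fin n,
    (A α : ℂ) = Complex.exp (-(θ : ℂ) * Complex.I) * d (α 0) ^ (-((m : ℤ) - 1)) * (A α : ℂ) *
      ∏ k ∈ Finset.univ.erase (0 : Fin m), d (α k)

/-- The set `𝔇^{(j)}` of normalized unimodular diagonal matrices `D` with
`A = e^{-i2πj/ℓ} D^{-(m-1)} A D`. -/
def Tensor.DSet {m n : ℕ} [NeZero m] [NeZero n] (A : Tensor m n) (ℓ j : ℕ) :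
    Set (Fin n → ℂ) :=
  {d | d 0 = 1 ∧ (∀ i, ‖d i‖ = 1) ∧ A.DiagSim (2 * Real.pi * j / ℓ) d}

/-- The set `𝔇 = ⋃_{j=0}^{ℓ-1} 𝔇^{(j)}`. -/
def Tensor.DFull {m n : ℕ} [NeZero m] [NeZero n] (A : Tensor m n) (ℓ : ℕ) :
    Set (Fin n → ℂ) :=
  ⋃ j ∈ Finset.range ℓ, A.DSet ℓ j

/-- An `m`-uniform hypergraph on vertex set `Fin n`. -/
structure UHypergraph (m n : ℕ) where
  edges : Finset (Finset (Fin n))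
  uniform : ∀ e ∈ edges, e.card = m

/-- The adjacency tensor of an `m`-uniform hypergraph. -/
noncomputable def UHypergraph.adjTensor {m n : ℕ} (G : UHypergraph m n) : Tensor m n :=
  fun α => if Finset.image α Finset.univ ∈ G.edges then (1 : ℝ) / (m - 1).factorial else 0

/-- A hypergraph is connected if every two vertices are joined by a walk. -/
def UHypergraph.Connected {m n : ℕ} (G : UHypergraph m n) : Prop :=
  ∀ i j : Fin n, Relation.ReflTransGen (fun u v => ∃ e ∈ G.edges, u ∈ e ∧ v ∈ e) i j

namespace StmtAux

open Finset

variable {m n : ℕ}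

/-- The homogeneous form `F_A(x) = A x^m`. -/
noncomputable def fF (G : UHypergraph m n) (x : Fin n → ℝ) : ℝ :=
  ∑ α : Fin m → Fin n, G.adjTensor α * ∏ k, x (α k)

/-- The row form `(A x^{m-1})_i`. -/
noncomputable def rowF [NeZero m] (G : UHypergraph m n) (i : Fin n) (x : Fin n → ℝ) : ℝ :=
  ∑ α : Fin m → Fin n,
    if α 0 = i then G.adjTensor α * ∏ k ∈ Finset.univ.erase (0 : Fin m), x (α k) else 0

/-- The compact search domain. -/
def Dset (m n : ℕ) : Set (Fin n → ℝ) := {x | (∀ i, 0 ≤ x i) ∧ ∑ i, x i ^ m = 1}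

lemma adj_nonneg (G : UHypergraph m n) (α : Fin m → Fin n) : 0 ≤ G.adjTensor α := by
  unfold UHypergraph.adjTensor
  split <;> positivity

lemma adj_ne_zero_iff (G : UHypergraph m n) (α : Fin m → Fin n) :
    G.adjTensor α ≠ 0 ↔ Finset.image α Finset.univ ∈ G.edges := by
  unfold UHypergraph.adjTensor
  have h : (1 : ℝ) / (m - 1).factorial ≠ 0 := by
    have := Nat.factorial_pos (m - 1); positivity
  split <;> simp_all

lemma adj_symm (G : UHypergraph m n) (σ : Equiv.Perm (Fin m)) (α : Fin m → Fin n) :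
    G.adjTensor (α ∘ σ) = G.adjTensor α := by
  unfold UHypergraph.adjTensor
  have : Finset.image (α ∘ σ) Finset.univ = Finset.image α Finset.univ := by
    rw [← Finset.image_image, Finset.image_univ_equiv]
  rw [this]

lemma adj_eq_zero_of_not_inj (G : UHypergraph m n) (α : Fin m → Fin n)
    (hα : ¬ Function.Injective α) : G.adjTensor α = 0 := by
  by_contra h
  have hmem := (adj_ne_zero_iff G α).mp h
  have hcard : (Finset.image α Finset.univ).card = m := G.uniform _ hmem
  have : Set.InjOn α (Finset.univ : Finset (Fin m)) := by
    apply Finset.injOn_of_card_image_eq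
    simpa [hcard] using hcard.symm ▸ (by simp : (Finset.univ : Finset (Fin m)).card = Fintype.card (Fin m))
  exact hα fun a b hab => this (by simp) (by simp) hab

lemma fF_continuous (G : UHypergraph m n) : Continuous (fF G) := by
  unfold fF
  refine continuous_finset_sum _ fun α _ => Continuous.mul continuous_const ?_
  exact continuous_finset_prod _ fun k _ => continuous_apply (α k)

lemma fF_nonneg (G : UHypergraph m n) {x : Fin n → ℝ} (hx : ∀ i, 0 ≤ x i) : 0 ≤ fF G x := by
  unfold fF
  refine Finset.sum_nonneg fun α _ => mul_nonneg (adj_nonneg G α) (Finset.prod_nonneg fun k _ => hx _)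

lemma fF_eq_sum_rowF [NeZero m] (G : UHypergraph m n) (x : Fin n → ℝ) :
    fF G x = ∑ i, x i * rowF G i x := by
  unfold fF rowF
  calc ∑ α : Fin m → Fin n, G.adjTensor α * ∏ k, x (α k)
      = ∑ α : Fin m → Fin n, ∑ i : Fin n,
          (if α 0 = i then x i * (G.adjTensor α * ∏ k ∈ Finset.univ.erase (0 : Fin m), x (α k))
           else 0) := by
        refine Finset.sum_congr rfl fun α _ => ?_
        rw [Finset.sum_ite_eq]
        simp only [Finset.mem_univ, if_true]
        rw [← Finset.mul_prod_erase Finset.univ (fun k => x (α k)) (Finset.mem_univ (0 : Fin m))]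
        ring
    _ = ∑ i : Fin n, ∑ α : Fin m → Fin n,
          (if α 0 = i then x i * (G.adjTensor α * ∏ k ∈ Finset.univ.erase (0 : Fin m), x (α k))
           else 0) := Finset.sum_comm
    _ = ∑ i, x i * ∑ α : Fin m → Fin n,
          if α 0 = i then G.adjTensor α * ∏ k ∈ Finset.univ.erase (0 : Fin m), x (α k) else 0 := by
        refine Finset.sum_congr rfl fun i _ => ?_
        rw [Finset.mul_sum]
        exact Finset.sum_congr rfl fun α _ => by rw [mul_ite, mul_zero]

lemma fF_smul (G : UHypergraph m n) (c : ℝ) (x : Fin n → ℝ) :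
    fF G (c • x) = c ^ m * fF G x := by
  unfold fF
  rw [Finset.mul_sum]
  refine Finset.sum_congr rfl fun α _ => ?_
  have : ∏ k, (c • x) (α k) = c ^ m * ∏ k, x (α k) := by
    simp only [Pi.smul_apply, smul_eq_mul]
    rw [Finset.prod_mul_distrib, Finset.prod_const]
    simp [Finset.card_univ]
  rw [this]; ring

lemma rowF_smul [NeZero m] (G : UHypergraph m n) (c : ℝ) (x : Fin n → ℝ) (i : Fin n) :
    rowF G i (c • x) = c ^ (m - 1) * rowF G i x := by
  unfold rowF
  rw [Finset.mul_sum]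
  refine Finset.sum_congr rfl fun α _ => ?_
  split
  · have : ∏ k ∈ Finset.univ.erase (0 : Fin m), (c • x) (α k)
        = c ^ (m - 1) * ∏ k ∈ Finset.univ.erase (0 : Fin m), x (α k) := by
      simp only [Pi.smul_apply, smul_eq_mul]
      rw [Finset.prod_mul_distrib, Finset.prod_const]
      congr 2
      rw [Finset.card_erase_of_mem (by simp), Finset.card_univ]
      simp
    rw [this]; ring
  · ring

end StmtAux
namespace StmtAux

open Finset

variable {m n : ℕ}

lemma Dset_compact [NeZero m] : IsCompact (Dset m n) := by
  have hsub : Dset m n ⊆ Set.univ.pi (fun _ : Fin n => Set.Icc (0:ℝ) 1) := by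
    intro x hx i _
    refine ⟨hx.1 i, ?_⟩
    have h1 : x i ^ m ≤ 1 := by
      have := Finset.single_le_sum (f := fun j => x j ^ m)
        (fun j _ => pow_nonneg (hx.1 j) m) (Finset.mem_univ i)
      rw [hx.2] at this; exact this
    exact (pow_le_one_iff_of_nonneg (hx.1 i) (NeZero.ne m)).mp h1
  have hclosed : IsClosed (Dset m n) := by
    have h1 : IsClosed {x : Fin n → ℝ | ∀ i, 0 ≤ x i} := by
      have : {x : Fin n → ℝ | ∀ i, 0 ≤ x i} = Set.pi Set.univ (fun _ => Set.Ici (0:ℝ)) := by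
        ext x; simp [Set.mem_pi, Pi.le_def]
      rw [this]; exact isClosed_set_pi fun _ _ => isClosed_Ici
    have h2 : IsClosed {x : Fin n → ℝ | ∑ i, x i ^ m = 1} := by
      have hcont : Continuous fun x : Fin n → ℝ => ∑ i, x i ^ m :=
        continuous_finset_sum _ fun i _ => (continuous_apply i).pow m
      exact isClosed_eq hcont continuous_const
    exact h1.inter h2
  exact (isCompact_univ_pi fun _ => isCompact_Icc).of_isClosed_subset hclosed hsub

lemma Dset_nonempty [NeZero m] [NeZero n] : (Dset m n).Nonempty := by
  refine ⟨fun j => if j = 0 then 1 else 0, fun i => by dsimp; split <;> norm_num, ?_⟩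
  have h : ∀ j : Fin n, (if j = 0 then (1:ℝ) else 0) ^ m = if j = 0 then 1 else 0 := by
    intro j; split <;> simp [zero_pow (NeZero.ne m)]
  simp only [h]
  simp

lemma exists_maxOn [NeZero m] [NeZero n] (G : UHypergraph m n) :
    ∃ x ∈ Dset m n, IsMaxOn (fF G) (Dset m n) x :=
  Dset_compact.exists_isMaxOn Dset_nonempty (fF_continuous G).continuousOn

/-- Enumerate an edge by an injective tuple whose first entry is any chosen vertex. -/
lemma exists_edge_tuple [NeZero m] (G : UHypergraph m n) {e : Finset (Fin n)} (he : e ∈ G.edges)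
    {v : Fin n} (hv : v ∈ e) :
    ∃ α : Fin m → Fin n, Function.Injective α ∧ Finset.image α Finset.univ = e ∧ α 0 = v := by
  have hcard : e.card = m := G.uniform e he
  let g := e.orderIsoOfFin hcard
  let β : Fin m → Fin n := fun k => (g k : Fin n)
  have hβinj : Function.Injective β := fun a b hab => g.injective (Subtype.ext hab)
  have hβim : Finset.image β Finset.univ = e := by
    apply Finset.eq_of_subset_of_card_le
    · intro w hw
      obtain ⟨k, _, rfl⟩ := Finset.mem_image.mp hw
      exact (g k).2
    · rw [Finset.card_image_of_injective _ hβinj, Finset.card_univ, Fintype.card_fin, hcard]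
  set k0 : Fin m := g.symm ⟨v, hv⟩ with hk0
  have hβk0 : β k0 = v := by
    simp only [β, hk0, OrderIso.apply_symm_apply]
  refine ⟨β ∘ Equiv.swap 0 k0, hβinj.comp (Equiv.swap 0 k0).injective, ?_, ?_⟩
  · rw [← Finset.image_image, Finset.image_univ_equiv, hβim]
  · simp only [Function.comp_apply, Equiv.swap_apply_left]
    exact hβk0

lemma crossing_edge (G : UHypergraph m n) (hconn : G.Connected) {x : Fin n → ℝ}
    {i j : Fin n} (hi : x i = 0) (hj : x j ≠ 0) :
    ∃ e ∈ G.edges, (∃ a ∈ e, x a = 0) ∧ ∃ b ∈ e, x b ≠ 0 := by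
  have key : ∀ a : Fin n,
      Relation.ReflTransGen (fun u v => ∃ e ∈ G.edges, u ∈ e ∧ v ∈ e) a i →
      x a ≠ 0 → ∃ e ∈ G.edges, (∃ a ∈ e, x a = 0) ∧ ∃ b ∈ e, x b ≠ 0 := by
    intro a h
    induction h using Relation.ReflTransGen.head_induction_on with
    | refl => intro ha; exact absurd hi ha
    | head hstep _ ih =>
      rename_i u c _
      intro hu
      by_cases hc : x c = 0
      · obtain ⟨e, he, hue, hce⟩ := hstep
        exact ⟨e, he, ⟨c, hce, hc⟩, ⟨u, hue, hu⟩⟩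
      · exact ih hc
  exact key j (hconn j i) hj

lemma maxOn_pos [NeZero m] [NeZero n] (G : UHypergraph m n) (hconn : G.Connected)
    {x : Fin n → ℝ} (hx : x ∈ Dset m n) (hmax : IsMaxOn (fF G) (Dset m n) x) (i : Fin n) :
    0 < x i := by
  rcases (hx.1 i).lt_or_eq with h | h
  · exact h
  exfalso
  have hi0 : x i = 0 := h.symm
  have hjex : ∃ j, x j ≠ 0 := by
    by_contra hco; push_neg at hco
    have h2 := hx.2
    simp [hco, zero_pow (NeZero.ne m)] at h2
  obtain ⟨j, hj⟩ := hjex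
  obtain ⟨e, he, ⟨a, hae, ha0⟩, ⟨b, hbe, hb0⟩⟩ := crossing_edge G hconn hi0 hj
  obtain ⟨α, hαinj, hαim, hα0⟩ := exists_edge_tuple G he hbe
  set ρ := fF G x with hρ
  have hρ0 : 0 ≤ ρ := fF_nonneg _ hx.1
  set c0 : ℝ := (1:ℝ) / (m - 1).factorial with hc0
  have hc0pos : 0 < c0 := by
    have := Nat.factorial_pos (m - 1); positivity
  have hAα : G.adjTensor α = c0 := by
    unfold UHypergraph.adjTensor
    rw [hαim, if_pos he]
  -- a positive lower bound for the nonzero coordinates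
  obtain ⟨δ, hδpos, hδle⟩ : ∃ δ : ℝ, 0 < δ ∧ ∀ k, x k ≠ 0 → δ ≤ x k := by
    set P : Finset (Fin n) := Finset.univ.filter (fun k => x k ≠ 0) with hP
    have hbP : b ∈ P := by simp [hP, hb0]
    have hPne : (P.image x).Nonempty := ⟨x b, Finset.mem_image_of_mem x hbP⟩
    refine ⟨(P.image x).min' hPne, ?_, ?_⟩
    · have hmem := (P.image x).min'_mem hPne
      obtain ⟨k, hk, hkx⟩ := Finset.mem_image.mp hmem
      have hk0 : x k ≠ 0 := (Finset.mem_filter.mp hk).2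
      rw [← hkx]; exact lt_of_le_of_ne (hx.1 k) (Ne.symm hk0)
    · intro k hk
      exact Finset.min'_le _ _ (Finset.mem_image_of_mem x (by simp [hP, hk]))
  set K : ℝ := c0 * δ with hK
  have hKpos : 0 < K := mul_pos hc0pos hδpos
  set t : ℝ := min δ (K / (ρ * n + 1)) / 2 with ht
  have hq : 0 < K / (ρ * n + 1) := by positivity
  have htpos : 0 < t := by
    have h1 := lt_min hδpos hq
    rw [ht]; linarith
  have htδ : t ≤ δ := by
    have h1 : min δ (K / (ρ * n + 1)) ≤ δ := min_le_left _ _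
    rw [ht]; linarith
  have htK : ρ * n * t < K := by
    have h1 : t ≤ K / (ρ * n + 1) / 2 := by
      have := min_le_right δ (K / (ρ * n + 1)); rw [ht]; linarith
    have hpos : (0:ℝ) < ρ * n + 1 := by positivity
    have h2 : ρ * n * t ≤ ρ * n * (K / (ρ * n + 1) / 2) := by
      apply mul_le_mul_of_nonneg_left h1; positivity
    have h3 : ρ * n * (K / (ρ * n + 1) / 2) ≤ K / 2 := by
      rw [div_div, mul_div_assoc', div_le_div_iff₀ (by positivity) (by norm_num)]
      nlinarith [hKpos, hρ0, (Nat.cast_nonneg n : (0:ℝ) ≤ n)]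
    linarith
  set w : Fin n → ℝ := fun k => if x k = 0 then t else x k with hw
  have hwpos : ∀ k, 0 < w k := by
    intro k; simp only [hw]; split
    · exact htpos
    · exact lt_of_le_of_ne (hx.1 k) (Ne.symm (by assumption))
  have hwge : ∀ k, x k ≤ w k := by
    intro k; simp only [hw]; split
    · rename_i hk; rw [hk]; exact htpos.le
    · exact le_rfl
  have hwt : ∀ k, t ≤ w k := by
    intro k; simp only [hw]; split
    · exact le_rfl
    · exact le_trans htδ (hδle k (by assumption))
  -- Step A : fF G w is noticeably bigger than ρ
  have hprodx : (∏ k : Fin m, x (α k)) = 0 := by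
    obtain ⟨ka, hka⟩ : ∃ ka, α ka = a := by
      have hmem : a ∈ Finset.image α Finset.univ := hαim ▸ hae
      obtain ⟨ka, _, hka⟩ := Finset.mem_image.mp hmem; exact ⟨ka, hka⟩
    exact Finset.prod_eq_zero (Finset.mem_univ ka) (by rw [hka]; exact ha0)
  obtain ⟨kb, hkb⟩ : ∃ kb, α kb = b := by
    have hmem : b ∈ Finset.image α Finset.univ := hαim ▸ hbe
    obtain ⟨kb, _, hkb⟩ := Finset.mem_image.mp hmem; exact ⟨kb, hkb⟩
  have hprodw : δ * t ^ (m - 1) ≤ ∏ k : Fin m, w (α k) := by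
    rw [← Finset.mul_prod_erase Finset.univ (fun k => w (α k)) (Finset.mem_univ kb)]
    have h1 : δ ≤ w (α kb) := by
      rw [hkb]; simp only [hw]; rw [if_neg hb0]; exact hδle b hb0
    have h2 : t ^ (m - 1) ≤ ∏ k ∈ Finset.univ.erase kb, w (α k) := by
      calc t ^ (m - 1) = ∏ _k ∈ Finset.univ.erase kb, t := by
            rw [Finset.prod_const, Finset.card_erase_of_mem (Finset.mem_univ kb),
              Finset.card_univ, Fintype.card_fin]
        _ ≤ ∏ k ∈ Finset.univ.erase kb, w (α k) :=
            Finset.prod_le_prod (fun _ _ => htpos.le) (fun k _ => hwt (α k))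
    calc δ * t ^ (m - 1) ≤ w (α kb) * ∏ k ∈ Finset.univ.erase kb, w (α k) := by
          apply mul_le_mul h1 h2 (by positivity) (hwpos _).le
      _ = _ := rfl
  have hstepA : ρ + K * t ^ (m - 1) ≤ fF G w := by
    have hdiff : ∀ β' : Fin m → Fin n,
        0 ≤ G.adjTensor β' * ∏ k, w (β' k) - G.adjTensor β' * ∏ k, x (β' k) := by
      intro β'
      have hpp : (∏ k : Fin m, x (β' k)) ≤ ∏ k : Fin m, w (β' k) :=
        Finset.prod_le_prod (fun k _ => hx.1 _) (fun k _ => hwge _)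
      have := mul_le_mul_of_nonneg_left hpp (adj_nonneg G β')
      linarith
    have hsum : fF G w - fF G x =
        ∑ β' : Fin m → Fin n,
          (G.adjTensor β' * ∏ k, w (β' k) - G.adjTensor β' * ∏ k, x (β' k)) := by
      unfold fF; rw [Finset.sum_sub_distrib]
    have hsingle := Finset.single_le_sum (f := fun β' : Fin m → Fin n =>
      G.adjTensor β' * ∏ k, w (β' k) - G.adjTensor β' * ∏ k, x (β' k))
      (fun β' _ => hdiff β') (Finset.mem_univ α)
    have hval : K * t ^ (m - 1) ≤
        G.adjTensor α * ∏ k, w (α k) - G.adjTensor α * ∏ k, x (α k) := by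
      rw [hAα, hprodx, mul_zero, sub_zero, hK, mul_assoc]
      exact mul_le_mul_of_nonneg_left hprodw hc0pos.le
    have h4 := hval.trans hsingle
    rw [← hsum] at h4
    rw [hρ]
    linarith
  -- Step B : the renormalisation constant is close to 1
  have hstepB : ∑ k, w k ^ m ≤ 1 + (n : ℝ) * t ^ m := by
    have h1 : ∀ k, w k ^ m ≤ x k ^ m + t ^ m := by
      intro k; simp only [hw]; split
      · rename_i hk; rw [hk]; simp [zero_pow (NeZero.ne m)]
      · have := pow_nonneg htpos.le m; linarith
    calc ∑ k, w k ^ m ≤ ∑ k, (x k ^ m + t ^ m) := Finset.sum_le_sum (fun k _ => h1 k)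
      _ = 1 + (n : ℝ) * t ^ m := by
          rw [Finset.sum_add_distrib, hx.2, Finset.sum_const, Finset.card_univ,
            Fintype.card_fin, nsmul_eq_mul]
  -- Step C : fF at w is at most ρ times that constant
  set N := ∑ k, w k ^ m with hNdef
  have hN : 0 < N := by
    have hle := Finset.single_le_sum (f := fun k => w k ^ m)
      (fun k _ => pow_nonneg (hwpos k).le m) (Finset.mem_univ (0 : Fin n))
    have := pow_pos (hwpos 0) m
    rw [hNdef]; linarith
  have hstepC : fF G w ≤ ρ * N := by
    set c := N ^ (-(1:ℝ)/m) with hc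
    have hcpos : 0 < c := Real.rpow_pos_of_pos hN _
    have hcm : c ^ m = N⁻¹ := by
      rw [hc, ← Real.rpow_natCast (N ^ (-(1:ℝ)/m)) m, ← Real.rpow_mul hN.le]
      rw [show (-(1:ℝ)/m) * m = -1 from div_mul_cancel₀ _ (Nat.cast_ne_zero.mpr (NeZero.ne m)),
        Real.rpow_neg_one]
    have hy : c • w ∈ Dset m n := by
      constructor
      · intro k
        have : (c • w) k = c * w k := rfl
        rw [this]; exact (mul_nonneg hcpos.le (hwpos k).le)
      · have : ∀ k, ((c • w) k) ^ m = c ^ m * w k ^ m := by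
          intro k; rw [show (c • w) k = c * w k from rfl, mul_pow]
        simp only [this, ← Finset.mul_sum, hcm, ← hNdef]
        field_simp
    have hle := isMaxOn_iff.mp hmax _ hy
    rw [fF_smul, hcm] at hle
    calc fF G w = N * (N⁻¹ * fF G w) := by field_simp
      _ ≤ N * ρ := mul_le_mul_of_nonneg_left hle hN.le
      _ = ρ * N := mul_comm _ _
  -- combine
  have hfinal : K * t ^ (m - 1) ≤ ρ * n * t ^ m := by
    have h2 : ρ * N ≤ ρ * (1 + (n:ℝ) * t ^ m) := mul_le_mul_of_nonneg_left hstepB hρ0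
    have := hstepA.trans (hstepC.trans h2)
    nlinarith
  have htm : t ^ m = t * t ^ (m - 1) := by
    conv_lhs => rw [← Nat.succ_pred_eq_of_pos (Nat.pos_of_ne_zero (NeZero.ne m))]
    rw [pow_succ']
    norm_num [Nat.pred_eq_sub_one]
  have hKle : K ≤ ρ * n * t := by
    have hpow : (0:ℝ) < t ^ (m - 1) := pow_pos htpos _
    have h1 : K * t ^ (m - 1) ≤ (ρ * n * t) * t ^ (m - 1) := by
      rw [htm] at hfinal; linarith [hfinal]
    exact le_of_mul_le_mul_right h1 hpow
  linarith

end StmtAux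
namespace StmtAux

open Finset

variable {m n : ℕ}

lemma normalized_le [NeZero m] [NeZero n] (G : UHypergraph m n) {x : Fin n → ℝ}
    (hmax : IsMaxOn (fF G) (Dset m n) x) {w : Fin n → ℝ} (hw : ∀ k, 0 ≤ w k)
    (hN : 0 < ∑ k, w k ^ m) : fF G w ≤ fF G x * ∑ k, w k ^ m := by
  set N := ∑ k, w k ^ m with hNdef
  set c := N ^ (-(1:ℝ)/m) with hc
  have hcpos : 0 < c := Real.rpow_pos_of_pos hN _
  have hcm : c ^ m = N⁻¹ := by
    rw [hc, ← Real.rpow_natCast (N ^ (-(1:ℝ)/m)) m, ← Real.rpow_mul hN.le,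
      show (-(1:ℝ)/m) * m = -1 from div_mul_cancel₀ _ (Nat.cast_ne_zero.mpr (NeZero.ne m)),
      Real.rpow_neg_one]
  have hy : c • w ∈ Dset m n := by
    constructor
    · intro k
      exact mul_nonneg hcpos.le (hw k)
    · have h1 : ∀ k, ((c • w) k) ^ m = c ^ m * w k ^ m := by
        intro k; rw [show (c • w) k = c * w k from rfl, mul_pow]
      simp only [h1, ← Finset.mul_sum, hcm, ← hNdef]
      field_simp
  have hle := isMaxOn_iff.mp hmax _ hy
  rw [fF_smul, hcm] at hle
  calc fF G w = N * (N⁻¹ * fF G w) := by field_simp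
    _ ≤ N * fF G x := mul_le_mul_of_nonneg_left hle hN.le
    _ = fF G x * N := mul_comm _ _

lemma filter_eq_singleton_iff {α : Fin m → Fin n} {i : Fin n} {k : Fin m}
    (h : Finset.univ.filter (fun j => α j = i) = {k}) (l : Fin m) : α l = i ↔ l = k := by
  constructor
  · intro hl
    have hmem : l ∈ Finset.univ.filter (fun j => α j = i) := by simp [hl]
    rw [h] at hmem
    exact Finset.mem_singleton.mp hmem
  · intro hl
    rw [hl]
    have hmem : k ∈ Finset.univ.filter (fun j => α j = i) := by
      rw [h]; exact Finset.mem_singleton_self k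
    exact (Finset.mem_filter.mp hmem).2

lemma filter_comp_swap {α : Fin m → Fin n} {i : Fin n} {k : Fin m} [NeZero m]
    (h : Finset.univ.filter (fun j => α j = i) = {k}) :
    Finset.univ.filter (fun j => (α ∘ Equiv.swap 0 k) j = i) = {0} := by
  have hiff : ∀ l, α l = i ↔ l = k := filter_eq_singleton_iff h
  ext j
  simp only [Finset.mem_filter, Finset.mem_univ, true_and, Function.comp_apply,
    Finset.mem_singleton, hiff]
  constructor
  · intro hj
    exact (Equiv.swap 0 k).injective (hj.trans (Equiv.swap_apply_left 0 k).symm)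
  · rintro rfl
    exact Equiv.swap_apply_left 0 k

lemma q_comp (x : Fin n → ℝ) (i : Fin n) (α : Fin m → Fin n) (σ : Equiv.Perm (Fin m)) :
    ∏ k ∈ Finset.univ.filter (fun k => (α ∘ σ) k ≠ i), x ((α ∘ σ) k)
      = ∏ k ∈ Finset.univ.filter (fun k => α k ≠ i), x (α k) := by
  rw [Finset.prod_filter, Finset.prod_filter]
  exact Equiv.prod_comp σ (fun k => if α k ≠ i then x (α k) else 1)

lemma fF_update_linear [NeZero m] (G : UHypergraph m n) (x : Fin n → ℝ) (i : Fin n) (t : ℝ) :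
    fF G (Function.update x i t)
      = fF G (Function.update x i 0) + t * ((m : ℝ) * rowF G i x) := by
  classical
  set q : (Fin m → Fin n) → ℝ :=
    fun α => ∏ k ∈ Finset.univ.filter (fun k => α k ≠ i), x (α k) with hq
  set cnt : (Fin m → Fin n) → ℕ :=
    fun α => (Finset.univ.filter (fun k => α k = i)).card with hcnt
  have key : ∀ s : ℝ, fF G (Function.update x i s)
      = ∑ α : Fin m → Fin n, G.adjTensor α * (s ^ cnt α * q α) := by
    intro s
    unfold fF
    refine Finset.sum_congr rfl fun α _ => ?_
    congr 1
    rw [← Finset.prod_filter_mul_prod_filter_not Finset.univ (fun k => α k = i)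
      (fun k => Function.update x i s (α k))]
    congr 1
    · have h1 : ∀ k ∈ Finset.univ.filter (fun k => α k = i),
          Function.update x i s (α k) = s := by
        intro k hk
        rw [(Finset.mem_filter.mp hk).2, Function.update_self]
      rw [Finset.prod_congr rfl h1, Finset.prod_const]
    · refine Finset.prod_congr rfl fun k hk => ?_
      exact Function.update_of_ne (Finset.mem_filter.mp hk).2 _ _
  have hcnt2 : ∀ α : Fin m → Fin n, 2 ≤ cnt α → G.adjTensor α = 0 := by
    intro α hα
    apply adj_eq_zero_of_not_inj
    obtain ⟨k1, hk1, k2, hk2, hne⟩ := Finset.one_lt_card.mp hα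
    intro hinj
    have h1 : α k1 = i := (Finset.mem_filter.mp hk1).2
    have h2 : α k2 = i := (Finset.mem_filter.mp hk2).2
    exact hne (hinj (h1.trans h2.symm))
  have split : ∀ s : ℝ, ∑ α : Fin m → Fin n, G.adjTensor α * (s ^ cnt α * q α)
      = (∑ α ∈ Finset.univ.filter (fun α => cnt α = 0), G.adjTensor α * q α)
        + s * ∑ α ∈ Finset.univ.filter (fun α => cnt α = 1), G.adjTensor α * q α := by
    intro s
    rw [← Finset.sum_filter_add_sum_filter_not Finset.univ (fun α => cnt α = 0)
      (fun α => G.adjTensor α * (s ^ cnt α * q α))]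
    congr 1
    · refine Finset.sum_congr rfl fun α hα => ?_
      rw [(Finset.mem_filter.mp hα).2, pow_zero]; ring
    · calc ∑ α ∈ Finset.univ.filter (fun α => ¬ cnt α = 0),
            G.adjTensor α * (s ^ cnt α * q α)
          = ∑ α ∈ Finset.univ.filter (fun α => ¬ cnt α = 0),
            (if cnt α = 1 then s * (G.adjTensor α * q α) else 0) := by
            refine Finset.sum_congr rfl fun α hα => ?_
            have h0 : cnt α ≠ 0 := (Finset.mem_filter.mp hα).2
            by_cases h1 : cnt α = 1
            · rw [if_pos h1, h1, pow_one]; ring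
            · rw [if_neg h1, hcnt2 α (by omega)]; ring
        _ = ∑ α ∈ (Finset.univ.filter (fun α => ¬ cnt α = 0)).filter (fun α => cnt α = 1),
            s * (G.adjTensor α * q α) := (Finset.sum_filter _ _).symm
        _ = ∑ α ∈ Finset.univ.filter (fun α => cnt α = 1), s * (G.adjTensor α * q α) := by
            congr 1
            rw [Finset.filter_filter]
            refine Finset.filter_congr fun α _ => ?_
            constructor
            · exact fun h => h.2
            · exact fun h => ⟨by omega, h⟩
        _ = s * ∑ α ∈ Finset.univ.filter (fun α => cnt α = 1),
            G.adjTensor α * q α := (Finset.mul_sum _ _ _).symm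
  have hT0 : ∀ k : Fin m,
      ∑ α ∈ Finset.univ.filter
        (fun α : Fin m → Fin n => Finset.univ.filter (fun j => α j = i) = {k}),
        G.adjTensor α * q α = rowF G i x := by
    intro k
    have hstep1 : ∑ α ∈ Finset.univ.filter
        (fun α : Fin m → Fin n => Finset.univ.filter (fun j => α j = i) = {k}),
        G.adjTensor α * q α
        = ∑ α ∈ Finset.univ.filter
          (fun α : Fin m → Fin n => Finset.univ.filter (fun j => α j = i) = {0}),
          G.adjTensor α * q α := by
      refine Finset.sum_nbij' (fun α => α ∘ Equiv.swap 0 k) (fun α => α ∘ Equiv.swap 0 k)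
        ?_ ?_ ?_ ?_ ?_
      · intro α hα
        simp only [Finset.mem_filter, Finset.mem_univ, true_and] at hα ⊢
        exact filter_comp_swap hα
      · intro α hα
        simp only [Finset.mem_filter, Finset.mem_univ, true_and] at hα ⊢
        have h0 : Finset.univ.filter (fun j => (α ∘ Equiv.swap 0 k) j = i) = {Equiv.swap 0 k 0} := by
          ext j
          simp only [Finset.mem_filter, Finset.mem_univ, true_and, Function.comp_apply,
            Finset.mem_singleton]
          have hiff : ∀ l, α l = i ↔ l = (0 : Fin m) := filter_eq_singleton_iff hα
          rw [hiff]
          exact ⟨fun hj => (Equiv.swap 0 k).injective (by simpa using hj),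
            fun hj => by rw [hj]; simp⟩
        rw [h0, Equiv.swap_apply_left]
      · intro α _
        funext j
        simp [Function.comp_apply, Equiv.swap_apply_self]
      · intro α _
        funext j
        simp [Function.comp_apply, Equiv.swap_apply_self]
      · intro α _
        rw [adj_symm, hq]
        simp only []
        rw [q_comp]
    rw [hstep1]
    have hrow : rowF G i x = ∑ α ∈ Finset.univ.filter (fun α : Fin m → Fin n => α 0 = i),
        G.adjTensor α * ∏ j ∈ Finset.univ.erase (0 : Fin m), x (α j) := by
      unfold rowF
      rw [Finset.sum_filter]
    rw [hrow]
    have hcongr : ∀ α ∈ Finset.univ.filter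
        (fun α : Fin m → Fin n => Finset.univ.filter (fun j => α j = i) = {0}),
        G.adjTensor α * q α
          = G.adjTensor α * ∏ j ∈ Finset.univ.erase (0 : Fin m), x (α j) := by
      intro α hα
      have hfil := (Finset.mem_filter.mp hα).2
      have hiff : ∀ l, α l = i ↔ l = (0 : Fin m) := filter_eq_singleton_iff hfil
      congr 1
      rw [hq]
      refine Finset.prod_congr ?_ fun _ _ => rfl
      ext j
      simp only [Finset.mem_filter, Finset.mem_univ, true_and, Finset.mem_erase, and_true,
        ne_eq, hiff]
    rw [Finset.sum_congr rfl hcongr]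
    refine Finset.sum_subset ?_ ?_
    · intro α hα
      have hfil := (Finset.mem_filter.mp hα).2
      simp only [Finset.mem_filter, Finset.mem_univ, true_and]
      have : (0 : Fin m) ∈ Finset.univ.filter (fun j => α j = i) := by rw [hfil]; simp
      exact (Finset.mem_filter.mp this).2
    · intro α hα hnot
      simp only [Finset.mem_filter, Finset.mem_univ, true_and] at hα hnot
      have h0mem : (0 : Fin m) ∈ Finset.univ.filter (fun j => α j = i) := by
        simp [hα]
      have : ∃ j ∈ Finset.univ.filter (fun j => α j = i), j ≠ 0 := by
        by_contra hco
        push_neg at hco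
        exact hnot (Finset.eq_singleton_iff_unique_mem.mpr ⟨h0mem, hco⟩)
      obtain ⟨j, hjmem, hj0⟩ := this
      have hji : α j = i := (Finset.mem_filter.mp hjmem).2
      have : ¬ Function.Injective α := by
        intro hinj
        exact hj0 (hinj (hji.trans hα.symm))
      rw [adj_eq_zero_of_not_inj G α this, zero_mul]
  have hT1 : ∑ α ∈ Finset.univ.filter (fun α => cnt α = 1), G.adjTensor α * q α
      = (m : ℝ) * rowF G i x := by
    have hdecomp : Finset.univ.filter (fun α => cnt α = 1)
        = (Finset.univ : Finset (Fin m)).biUnion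
          (fun k => Finset.univ.filter
            (fun α : Fin m → Fin n => Finset.univ.filter (fun j => α j = i) = {k})) := by
      ext α
      simp only [Finset.mem_filter, Finset.mem_biUnion, Finset.mem_univ, true_and]
      rw [hcnt]
      exact Finset.card_eq_one
    rw [hdecomp, Finset.sum_biUnion]
    · rw [Finset.sum_congr rfl (fun k _ => hT0 k), Finset.sum_const, Finset.card_univ,
        Fintype.card_fin, nsmul_eq_mul]
    · intro k _ k' _ hkk'
      simp only [Function.onFun]
      rw [Finset.disjoint_left]
      intro α h1 h2
      simp only [Finset.mem_filter, Finset.mem_univ, true_and] at h1 h2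
      apply hkk'
      have := h1.symm.trans h2
      exact Finset.singleton_injective this
  rw [key t, key 0, split t, split 0, hT1]
  ring

lemma rowF_update [NeZero m] (G : UHypergraph m n) (x : Fin n → ℝ) (i : Fin n) (t : ℝ) :
    rowF G i (Function.update x i t) = rowF G i x := by
  unfold rowF
  refine Finset.sum_congr rfl fun α _ => ?_
  split
  · rename_i h0
    by_cases hA : G.adjTensor α = 0
    · rw [hA, zero_mul, zero_mul]
    · congr 1
      refine Finset.prod_congr rfl fun k hk => ?_
      have hinj : Function.Injective α := by
        by_contra hni
        exact hA (adj_eq_zero_of_not_inj G α hni)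
      have hk0 : k ≠ 0 := (Finset.mem_erase.mp hk).1
      have : α k ≠ i := by
        intro hki
        exact hk0 (hinj (hki.trans h0.symm))
      exact Function.update_of_ne this _ _
  · rfl

lemma maxOn_eigen [NeZero m] [NeZero n] (G : UHypergraph m n) {x : Fin n → ℝ}
    (hx : x ∈ Dset m n) (hmax : IsMaxOn (fF G) (Dset m n) x) (hpos : ∀ i, 0 < x i)
    (i : Fin n) : rowF G i x = fF G x * x i ^ (m - 1) := by
  set ρ := fF G x with hρ
  set B := fF G (Function.update x i 0) with hB
  set C := (m : ℝ) * rowF G i x with hC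
  set S := ∑ j, (Function.update x i 0 j) ^ m with hS
  have hSx : ∀ t : ℝ, ∑ j, (Function.update x i t j) ^ m = S + t ^ m := by
    intro t
    have hup : ∀ (s : ℝ) (j), (Function.update x i s j) ^ m
        = Function.update (fun k => x k ^ m) i (s ^ m) j := by
      intro s j
      exact Function.apply_update (fun _ v => v ^ m) x i s j
    rw [hS]
    simp only [hup]
    rw [Finset.sum_update_of_mem (Finset.mem_univ i), Finset.sum_update_of_mem (Finset.mem_univ i)]
    rw [zero_pow (NeZero.ne m)]
    ring
  have hS1 : S + x i ^ m = 1 := by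
    rw [← hSx (x i)]
    have : Function.update x i (x i) = x := Function.update_eq_self i x
    rw [this, hx.2]
  have hSnn : 0 ≤ S := by
    rw [hS]
    refine Finset.sum_nonneg fun j _ => pow_nonneg ?_ m
    rcases eq_or_ne j i with rfl | hji
    · rw [Function.update_self]
    · rw [Function.update_of_ne hji]; exact hx.1 j
  set g : ℝ → ℝ := fun t => (B + C * t) / (S + t ^ m) with hg
  have hfF : ∀ t : ℝ, fF G (Function.update x i t) = B + C * t := by
    intro t
    rw [fF_update_linear, hC]
    ring
  have hgle : ∀ t ∈ Set.Ioi (0:ℝ), g t ≤ ρ := by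
    intro t ht
    have htpos : (0:ℝ) < t := ht
    have hwnn : ∀ k, 0 ≤ Function.update x i t k := by
      intro k
      rcases eq_or_ne k i with rfl | hki
      · rw [Function.update_self]; exact htpos.le
      · rw [Function.update_of_ne hki]; exact (hpos k).le
    have hNpos : 0 < ∑ k, (Function.update x i t k) ^ m := by
      rw [hSx t]
      have := pow_pos htpos m
      linarith
    have := normalized_le G hmax hwnn hNpos
    rw [hfF t, hSx t] at this
    show (B + C * t) / (S + t ^ m) ≤ ρ
    rw [div_le_iff₀ (by rw [← hSx t]; exact hNpos)]
    calc B + C * t ≤ ρ * (S + t ^ m) := by rw [hρ]; exact this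
      _ = ρ * (S + t ^ m) := rfl
  have hgval : g (x i) = ρ := by
    show (B + C * x i) / (S + x i ^ m) = ρ
    rw [hS1, div_one, ← hfF (x i), Function.update_eq_self]
  have hlocal : IsLocalMax g (x i) := by
    have hmem : Set.Ioi (0:ℝ) ∈ nhds (x i) := isOpen_Ioi.mem_nhds (hpos i)
    refine Filter.eventually_of_mem hmem fun t ht => ?_
    rw [hgval]
    exact hgle t ht
  have hder : HasDerivAt g
      ((C * (S + x i ^ m) - (B + C * x i) * ((m : ℝ) * x i ^ (m - 1))) / (S + x i ^ m) ^ 2)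
      (x i) := by
    have hnum : HasDerivAt (fun t : ℝ => B + C * t) C (x i) := by
      simpa using ((hasDerivAt_id (x i)).const_mul C).const_add B
    have hden : HasDerivAt (fun t : ℝ => S + t ^ m) ((m : ℝ) * x i ^ (m - 1)) (x i) := by
      simpa using (hasDerivAt_pow m (x i)).const_add S
    have hne : S + x i ^ m ≠ 0 := by rw [hS1]; norm_num
    exact hnum.div hden hne
  have hzero := hlocal.hasDerivAt_eq_zero hder
  have hρeq : B + C * x i = ρ := by
    rw [← hfF (x i), Function.update_eq_self, hρ]
  rw [hS1, hρeq] at hzero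
  have hnum : C * 1 - ρ * ((m : ℝ) * x i ^ (m - 1)) = 0 := by
    rcases div_eq_zero_iff.mp hzero with h | h
    · exact h
    · exfalso; norm_num at h
  have hm : (m : ℝ) ≠ 0 := Nat.cast_ne_zero.mpr (NeZero.ne m)
  have hCval : C = ρ * ((m : ℝ) * x i ^ (m - 1)) := by linarith
  exact mul_left_cancel₀ hm (by rw [← hC, hCval]; ring)

end StmtAux
namespace StmtAux

open Finset

variable {m n : ℕ}

lemma rot_abs (ℓ : ℕ) (hℓ : ℓ ≠ 0) : ‖rot ℓ‖ = 1 := by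
  have h : rot ℓ = Complex.exp ((((2 * Real.pi / ℓ) : ℝ) : ℂ) * Complex.I) := by
    unfold rot
    congr 1
    push_cast
    field_simp
  rw [h, Complex.norm_exp_ofReal_mul_I]

lemma rot_prim (ℓ : ℕ) (hℓ : ℓ ≠ 0) : IsPrimitiveRoot (rot ℓ) ℓ := by
  unfold rot
  exact Complex.isPrimitiveRoot_exp ℓ hℓ

lemma rot_ne_one {ℓ : ℕ} (hℓ : 2 ≤ ℓ) : rot ℓ ≠ 1 := by
  intro h
  have hp := rot_prim ℓ (by omega)
  have hd := hp.dvd_of_pow_eq_one 1 (by rw [pow_one, h])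
  have := Nat.le_of_dvd one_pos hd
  omega

lemma rot_ne_zero (ℓ : ℕ) : rot ℓ ≠ 0 := by
  unfold rot
  exact Complex.exp_ne_zero _

/-- Equality in the triangle inequality: every term is aligned with the sum. -/
lemma sum_abs_align {ι : Type*} (s : Finset ι) (w : ι → ℂ)
    (h : ‖∑ b ∈ s, w b‖ = ∑ b ∈ s, ‖w b‖) :
    ∀ a ∈ s, w a * ((∑ b ∈ s, ‖w b‖ : ℝ) : ℂ)
      = ((‖w a‖ : ℝ) : ℂ) * ∑ b ∈ s, w b := by
  classical
  set S : ℂ := ∑ b ∈ s, w b with hS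
  set T : ℝ := ∑ b ∈ s, ‖w b‖ with hT
  have hle : ∀ a ∈ s, (w a * (starRingEnd ℂ) S).re ≤ ‖w a‖ * ‖S‖ := by
    intro a _
    calc (w a * (starRingEnd ℂ) S).re ≤ ‖w a * (starRingEnd ℂ) S‖ :=
          Complex.re_le_norm _
      _ = ‖w a‖ * ‖S‖ := by rw [norm_mul, Complex.norm_conj]
  have hsum : ∑ a ∈ s, (w a * (starRingEnd ℂ) S).re = ‖S‖ * ‖S‖ := by
    rw [← Complex.re_sum, ← Finset.sum_mul, ← hS, Complex.mul_conj, Complex.normSq_eq_norm_sq]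
    push_cast
    ring_nf
    simp [sq]
  have hzero : ∑ a ∈ s, (‖w a‖ * ‖S‖ - (w a * (starRingEnd ℂ) S).re)
      = 0 := by
    rw [Finset.sum_sub_distrib, hsum, ← Finset.sum_mul, ← hT, h]
    ring
  have hre : ∀ a ∈ s, (w a * (starRingEnd ℂ) S).re = ‖w a‖ * ‖S‖ := by
    intro a ha
    have := (Finset.sum_eq_zero_iff_of_nonneg
      (fun b hb => sub_nonneg.mpr (hle b hb))).mp hzero a ha
    linarith
  intro a ha
  have habs : ‖w a * (starRingEnd ℂ) S‖ = (w a * (starRingEnd ℂ) S).re := by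
    rw [norm_mul, Complex.norm_conj, hre a ha]
  have him : (w a * (starRingEnd ℂ) S).im = 0 := by
    have h1 := Complex.sq_norm (w a * (starRingEnd ℂ) S)
    rw [habs] at h1
    have h2 := Complex.normSq_apply (w a * (starRingEnd ℂ) S)
    have h3 : (w a * (starRingEnd ℂ) S).im * (w a * (starRingEnd ℂ) S).im = 0 := by
      nlinarith [h1, h2]
    exact mul_self_eq_zero.mp h3
  have hreal : w a * (starRingEnd ℂ) S = ((‖w a‖ * ‖S‖ : ℝ) : ℂ) := by
    apply Complex.ext
    · rw [hre a ha, Complex.ofReal_re]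
    · rw [him, Complex.ofReal_im]
  by_cases hS0 : S = 0
  · have hT0 : T = 0 := by rw [← h, hS0, norm_zero]
    rw [hS0, hT0]
    simp
  · have habsne : ((‖S‖ : ℝ) : ℂ) ≠ 0 :=
      Complex.ofReal_ne_zero.mpr (norm_ne_zero_iff.mpr hS0)
    apply mul_right_cancel₀ habsne
    have hTabs : (T : ℝ) = ‖S‖ := h.symm
    calc w a * (T : ℂ) * ((‖S‖ : ℝ) : ℂ)
        = w a * (((‖S‖ * ‖S‖ : ℝ)) : ℂ) := by
          rw [← hTabs]; push_cast; ring
      _ = w a * ((Complex.normSq S : ℝ) : ℂ) := by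
          rw [Complex.normSq_eq_norm_sq]; push_cast; ring
      _ = w a * (S * (starRingEnd ℂ) S) := by rw [Complex.mul_conj]
      _ = (w a * (starRingEnd ℂ) S) * S := by ring
      _ = ((‖w a‖ * ‖S‖ : ℝ) : ℂ) * S := by rw [hreal]
      _ = ((‖w a‖ : ℝ) : ℂ) * S * ((‖S‖ : ℝ) : ℂ) := by
          push_cast; ring

/-- The absolute value of a row term. -/
lemma abs_row_term (G : UHypergraph m n) (y : Fin n → ℂ) (α : Fin m → Fin n) [NeZero m] :
    ‖(G.adjTensor α : ℂ) * ∏ k ∈ Finset.univ.erase (0 : Fin m), y (α k)‖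
      = G.adjTensor α * ∏ k ∈ Finset.univ.erase (0 : Fin m), ‖y (α k)‖ := by
  rw [norm_mul, Complex.norm_real, Real.norm_eq_abs, abs_of_nonneg (adj_nonneg G α), norm_prod]

/-- `rowF` at the coordinatewise absolute value dominates the complex row sum. -/
lemma abs_rowsum_le (G : UHypergraph m n) (y : Fin n → ℂ) (i : Fin n) [NeZero m] :
    ‖∑ α : Fin m → Fin n,
        if α 0 = i then (G.adjTensor α : ℂ) * ∏ k ∈ Finset.univ.erase (0 : Fin m), y (α k) else 0‖
      ≤ rowF G i (fun j => ‖y j‖) := by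
  unfold rowF
  calc ‖∑ α : Fin m → Fin n,
        if α 0 = i then (G.adjTensor α : ℂ) * ∏ k ∈ Finset.univ.erase (0 : Fin m), y (α k) else 0‖
      ≤ ∑ α : Fin m → Fin n, ‖if α 0 = i then (G.adjTensor α : ℂ) * ∏ k ∈ Finset.univ.erase (0 : Fin m), y (α k) else 0‖ :=
        norm_sum_le _ _
    _ = ∑ α : Fin m → Fin n,
        (if α 0 = i then G.adjTensor α * ∏ k ∈ Finset.univ.erase (0 : Fin m), ‖y (α k)‖ else 0) := by
        refine Finset.sum_congr rfl fun α _ => ?_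
        split
        · exact abs_row_term G y α
        · exact norm_zero
    _ ≤ _ := le_refl _

/-- Sum of absolute values of the row terms equals `rowF` of absolute values. -/
lemma sum_abs_row (G : UHypergraph m n) (y : Fin n → ℂ) (i : Fin n) [NeZero m] :
    ∑ α : Fin m → Fin n, ‖if α 0 = i then (G.adjTensor α : ℂ) * ∏ k ∈ Finset.univ.erase (0 : Fin m), y (α k) else 0‖
      = rowF G i (fun j => ‖y j‖) := by
  unfold rowF
  refine Finset.sum_congr rfl fun α _ => ?_
  split
  · exact abs_row_term G y α
  · exact norm_zero

/-- Transfer of a real eigen-equation to the complex one. -/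
lemma eigEq_of_real [NeZero m] (G : UHypergraph m n) {x : Fin n → ℝ} {ρ : ℝ}
    (h : ∀ i, rowF G i x = ρ * x i ^ (m - 1)) :
    (G.adjTensor).EigEq (ρ : ℂ) (fun i => ((x i : ℝ) : ℂ)) := by
  intro i
  have h1 := h i
  have h2 : ((rowF G i x : ℝ) : ℂ) = ∑ α : Fin m → Fin n,
      if α 0 = i then (G.adjTensor α : ℂ)
        * ∏ k ∈ Finset.univ.erase (0 : Fin m), ((x (α k) : ℝ) : ℂ) else 0 := by
    unfold rowF
    push_cast [apply_ite (fun r : ℝ => (r : ℂ))]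
    rfl
  rw [← h2, h1]
  push_cast
  ring

end StmtAux
namespace StmtAux

open Finset

variable {m n : ℕ}

lemma pow_split [NeZero m] {K : Type*} [Monoid K] (r : K) : r ^ m = r * r ^ (m - 1) := by
  conv_lhs => rw [← Nat.succ_pred_eq_of_pos (Nat.pos_of_ne_zero (NeZero.ne m))]
  rw [pow_succ']
  norm_num [Nat.pred_eq_sub_one]

lemma normalize_c [NeZero m] (N : ℝ) (hN : 0 < N) : ∃ c : ℝ, 0 < c ∧ c ^ m = N⁻¹ := by
  refine ⟨N ^ (-(1:ℝ)/m), Real.rpow_pos_of_pos hN _, ?_⟩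
  rw [← Real.rpow_natCast (N ^ (-(1:ℝ)/m)) m, ← Real.rpow_mul hN.le,
    show (-(1:ℝ)/m) * m = -1 from div_mul_cancel₀ _ (Nat.cast_ne_zero.mpr (NeZero.ne m)),
    Real.rpow_neg_one]

lemma exists_u [NeZero m] [NeZero n] {ℓ : ℕ} (hℓ : 2 ≤ ℓ) (G : UHypergraph m n)
    (hconn : G.Connected) (hsym : (G.adjTensor).SpectralSym ℓ) (hne : G.edges.Nonempty) :
    ∃ u : Fin n → ℂ, (∀ v, u v ≠ 0) ∧
      (∀ e ∈ G.edges, ∀ v ∈ e, ∏ w ∈ e, u w = rot ℓ * u v ^ m) := by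
  classical
  obtain ⟨x, hxD, hmax⟩ := exists_maxOn G
  have hpos := maxOn_pos G hconn hxD hmax
  have heig : ∀ i, rowF G i x = fF G x * x i ^ (m - 1) := maxOn_eigen G hxD hmax hpos
  set ρ := fF G x with hρ
  have hρpos : 0 < ρ := by
    obtain ⟨e, he⟩ := hne
    have hecard : e.card = m := G.uniform e he
    have hev : e.Nonempty := Finset.card_pos.mp
      (by rw [hecard]; exact Nat.pos_of_ne_zero (NeZero.ne m))
    obtain ⟨v, hv⟩ := hev
    obtain ⟨α, hαinj, hαim, hα0⟩ := exists_edge_tuple G he hv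
    have hA : G.adjTensor α = 1 / (m - 1).factorial := by
      unfold UHypergraph.adjTensor; rw [hαim, if_pos he]
    have hterm : 0 < G.adjTensor α * ∏ k, x (α k) := by
      apply mul_pos
      · rw [hA]
        have := Nat.factorial_pos (m - 1)
        positivity
      · exact Finset.prod_pos fun k _ => hpos _
    have hle := Finset.single_le_sum
      (f := fun β : Fin m → Fin n => G.adjTensor β * ∏ k, x (β k))
      (fun β _ => mul_nonneg (adj_nonneg G β) (Finset.prod_nonneg fun k _ => (hpos _).le))
      (Finset.mem_univ α)
    calc (0:ℝ) < G.adjTensor α * ∏ k, x (α k) := hterm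
      _ ≤ ρ := hle
  have hxE : (G.adjTensor).IsEig (ρ : ℂ) := by
    refine ⟨fun i => ((x i : ℝ) : ℂ), ?_, eigEq_of_real G heig⟩
    intro h0
    have := congrFun h0 0
    simp only [Pi.zero_apply, Complex.ofReal_eq_zero] at this
    exact (hpos 0).ne' this
  obtain ⟨y, hy0, hyEq⟩ := (hsym ρ).mp hxE
  set z : Fin n → ℝ := fun i => ‖y i‖ with hz
  have hzv : ∀ j, ‖y j‖ = z j := fun _ => rfl
  have hznn : ∀ i, 0 ≤ z i := fun i => norm_nonneg _
  have habsRHS : ∀ i, ‖rot ℓ * (ρ:ℂ) * y i ^ (m - 1)‖ = ρ * z i ^ (m - 1) := by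
    intro i
    rw [norm_mul, norm_mul, rot_abs ℓ (by omega), norm_pow, Complex.norm_real, Real.norm_eq_abs,
      abs_of_nonneg hρpos.le, one_mul, hzv]
  have hzrow : ∀ i, ρ * z i ^ (m - 1) ≤ rowF G i z := by
    intro i
    have h1 := hyEq i
    have h3 := abs_rowsum_le G y i
    simp only [hzv] at h3
    calc ρ * z i ^ (m - 1) = ‖rot ℓ * (ρ:ℂ) * y i ^ (m - 1)‖ := (habsRHS i).symm
      _ = ‖∑ α : Fin m → Fin n,
          if α 0 = i then (G.adjTensor α : ℂ)
            * ∏ k ∈ Finset.univ.erase (0 : Fin m), y (α k) else 0‖ := by rw [h1]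
      _ ≤ rowF G i z := h3
  have hNz : 0 < ∑ k, z k ^ m := by
    have hex : ∃ i, y i ≠ 0 := by
      by_contra hc; push_neg at hc; exact hy0 (funext fun i => hc i)
    obtain ⟨i0, hi0⟩ := hex
    have hzi0 : 0 < z i0 := by
      have := norm_pos_iff.mpr hi0
      rwa [hzv] at this
    have hle := Finset.single_le_sum (f := fun k => z k ^ m)
      (fun k _ => pow_nonneg (hznn k) m) (Finset.mem_univ i0)
    have := pow_pos hzi0 m
    linarith
  have hfzlow : ρ * ∑ k, z k ^ m ≤ fF G z := by
    rw [fF_eq_sum_rowF]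
    calc ρ * ∑ k, z k ^ m = ∑ i, z i * (ρ * z i ^ (m - 1)) := by
          rw [Finset.mul_sum]
          refine Finset.sum_congr rfl fun i _ => ?_
          rw [pow_split (m := m) (z i)]; ring
      _ ≤ ∑ i, z i * rowF G i z :=
          Finset.sum_le_sum fun i _ => mul_le_mul_of_nonneg_left (hzrow i) (hznn i)
  have hfzhigh : fF G z ≤ ρ * ∑ k, z k ^ m := normalized_le G hmax hznn hNz
  have hfzeq : fF G z = ρ * ∑ k, z k ^ m := le_antisymm hfzhigh hfzlow
  obtain ⟨c, hcpos, hcm⟩ := normalize_c (m := m) (∑ k, z k ^ m) hNz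
  have hczD : c • z ∈ Dset m n := by
    constructor
    · intro k; exact mul_nonneg hcpos.le (hznn k)
    · have h1 : ∀ k, ((c • z) k) ^ m = c ^ m * z k ^ m := by
        intro k; rw [show (c • z) k = c * z k from rfl, mul_pow]
      simp only [h1, ← Finset.mul_sum, hcm]
      exact inv_mul_cancel₀ hNz.ne'
  have hfcz : fF G (c • z) = ρ := by
    rw [fF_smul, hcm, hfzeq]
    field_simp
  have hmaxz : IsMaxOn (fF G) (Dset m n) (c • z) := by
    refine isMaxOn_iff.mpr fun b hb => ?_
    rw [hfcz]
    exact isMaxOn_iff.mp hmax b hb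
  have hposcz := maxOn_pos G hconn hczD hmaxz
  have hzpos : ∀ i, 0 < z i := by
    intro i
    rcases (hznn i).lt_or_eq with h | h
    · exact h
    · exfalso
      have h1 := hposcz i
      have h2 : (c • z) i = 0 := by
        rw [show (c • z) i = c * z i from rfl, ← h, mul_zero]
      rw [h2] at h1
      exact lt_irrefl 0 h1
  have heigz : ∀ i, rowF G i z = ρ * z i ^ (m - 1) := by
    intro i
    have h1 := maxOn_eigen G hczD hmaxz hposcz i
    rw [hfcz, rowF_smul] at h1
    have h2 : ((c • z) i) ^ (m - 1) = c ^ (m - 1) * z i ^ (m - 1) := by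
      rw [show (c • z) i = c * z i from rfl, mul_pow]
    rw [h2] at h1
    have hcne : c ^ (m - 1) ≠ 0 := pow_ne_zero _ hcpos.ne'
    apply mul_left_cancel₀ hcne
    rw [h1]; ring
  have hyne : ∀ v, y v ≠ 0 := by
    intro v hv
    have := hzpos v
    rw [← hzv v, hv, norm_zero] at this
    exact lt_irrefl 0 this
  have hzne : ∀ v, ((z v : ℝ) : ℂ) ≠ 0 := fun v => Complex.ofReal_ne_zero.mpr (hzpos v).ne'
  set u : Fin n → ℂ := fun v => y v / ((z v : ℝ) : ℂ) with hu
  have hune : ∀ v, u v ≠ 0 := fun v => div_ne_zero (hyne v) (hzne v)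
  have hyu : ∀ j, y j = u j * ((z j : ℝ) : ℂ) := by
    intro j
    show y j = y j / ((z j : ℝ) : ℂ) * ((z j : ℝ) : ℂ)
    exact (div_mul_cancel₀ _ (hzne j)).symm
  refine ⟨u, hune, ?_⟩
  intro e he v hv
  obtain ⟨α, hαinj, hαim, hα0⟩ := exists_edge_tuple G he hv
  have hApos : 0 < G.adjTensor α := by
    unfold UHypergraph.adjTensor
    rw [hαim, if_pos he]
    have := Nat.factorial_pos (m - 1)
    positivity
  have h1 := hyEq v
  have habseq : ‖∑ α' : Fin m → Fin n,
      if α' 0 = v then (G.adjTensor α' : ℂ)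
        * ∏ k ∈ Finset.univ.erase (0 : Fin m), y (α' k) else 0‖
      = ∑ α' : Fin m → Fin n, ‖if α' 0 = v then (G.adjTensor α' : ℂ)
        * ∏ k ∈ Finset.univ.erase (0 : Fin m), y (α' k) else 0‖ := by
    rw [h1, habsRHS v, sum_abs_row G y v]
    simp only [hzv]
    exact (heigz v).symm
  have halign := sum_abs_align Finset.univ
    (fun α' : Fin m → Fin n => if α' 0 = v then (G.adjTensor α' : ℂ)
      * ∏ k ∈ Finset.univ.erase (0 : Fin m), y (α' k) else 0)
    habseq α (Finset.mem_univ α)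
  simp only [if_pos hα0] at halign
  rw [sum_abs_row G y v] at halign
  simp only [hzv] at halign
  rw [heigz v, h1, abs_row_term G y α] at halign
  simp only [hzv] at halign
  -- now extract the product relation
  set Py : ℂ := ∏ k ∈ Finset.univ.erase (0 : Fin m), y (α k) with hPy
  set Pz : ℝ := ∏ k ∈ Finset.univ.erase (0 : Fin m), z (α k) with hPz
  set Pu : ℂ := ∏ k ∈ Finset.univ.erase (0 : Fin m), u (α k) with hPu
  have hPzpos : 0 < Pz := Finset.prod_pos fun k _ => hzpos _
  have hPyz : Py = Pu * ((Pz : ℝ) : ℂ) := by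
    rw [hPy, hPz, hPu]
    push_cast
    rw [← Finset.prod_mul_distrib]
    exact Finset.prod_congr rfl fun k _ => hyu (α k)
  have hkey : ((G.adjTensor α : ℝ) : ℂ) * ((Pz : ℝ) : ℂ) * ((ρ : ℝ) : ℂ)
        * ((z v : ℝ) : ℂ) ^ (m - 1) * Pu
      = ((G.adjTensor α : ℝ) : ℂ) * ((Pz : ℝ) : ℂ) * ((ρ : ℝ) : ℂ)
        * ((z v : ℝ) : ℂ) ^ (m - 1) * (rot ℓ * u v ^ (m - 1)) := by
    rw [hPyz, hyu v] at halign
    push_cast at halign ⊢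
    ring_nf at halign ⊢
    linear_combination halign
  have hcancel : Pu = rot ℓ * u v ^ (m - 1) := by
    have hne0 : ((G.adjTensor α : ℝ) : ℂ) * ((Pz : ℝ) : ℂ) * ((ρ : ℝ) : ℂ)
        * ((z v : ℝ) : ℂ) ^ (m - 1) ≠ 0 := by
      apply mul_ne_zero
      apply mul_ne_zero
      apply mul_ne_zero
      · exact Complex.ofReal_ne_zero.mpr hApos.ne'
      · exact Complex.ofReal_ne_zero.mpr hPzpos.ne'
      · exact Complex.ofReal_ne_zero.mpr hρpos.ne'
      · exact pow_ne_zero _ (hzne v)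
    exact mul_left_cancel₀ hne0 (by
      calc _ = _ := hkey)
  have hprodu : ∏ w ∈ e, u w = u v * Pu := by
    rw [← hαim, Finset.prod_image (fun a _ b _ hab => hαinj hab), hPu,
      ← Finset.mul_prod_erase Finset.univ (fun k => u (α k)) (Finset.mem_univ (0 : Fin m)), hα0]
  rw [hprodu, hcancel, pow_split (m := m) (u v)]
  ring

end StmtAux
/-- a connected `m`-uniform hypergraph which is spectral `ℓ`-symmetric with
`ℓ ≥ 2` is `m`-colorable (no edge monochromatic), hence `χ(G) ≤ m`. -/
theorem stmt11 {m n ℓ : ℕ} [NeZero m] [NeZero n] (hℓ : 2 ≤ ℓ) (G : UHypergraph m n)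
    (hconn : G.Connected) (hsym : (G.adjTensor).SpectralSym ℓ) :
    ∃ ψ : Fin n → ℕ, (∀ v, 1 ≤ ψ v ∧ ψ v ≤ m) ∧
      ∀ e ∈ G.edges, ∃ u ∈ e, ∃ w ∈ e, ψ u ≠ ψ w := by
  classical
  open StmtAux in
  by_cases hne : G.edges.Nonempty
  · obtain ⟨u, hune, hedgeP⟩ := StmtAux.exists_u hℓ G hconn hsym hne
    have hstep : ∀ a b : Fin n, (∃ e ∈ G.edges, a ∈ e ∧ b ∈ e) → u a ^ m = u b ^ m := by
      rintro a b ⟨e, he, hae, hbe⟩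
      have h1 := hedgeP e he a hae
      have h2 := hedgeP e he b hbe
      exact mul_left_cancel₀ (StmtAux.rot_ne_zero ℓ) (h1.symm.trans h2)
    have hconst : ∀ a b : Fin n, u a ^ m = u b ^ m := by
      intro a b
      have h := hconn a b
      induction h using Relation.ReflTransGen.head_induction_on with
      | refl => rfl
      | head hstep' _ ih => exact (hstep _ _ hstep').trans ih
    have hprim : IsPrimitiveRoot (rot m) m := StmtAux.rot_prim m (NeZero.ne m)
    have hpow1 : ∀ v, (u v * (u 0)⁻¹) ^ m = 1 := by
      intro v
      rw [mul_pow, hconst v 0, inv_pow, mul_inv_cancel₀ (pow_ne_zero m (hune 0))]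
    have hex : ∀ v, ∃ k, k < m ∧ (rot m) ^ k = u v * (u 0)⁻¹ := by
      intro v
      obtain ⟨k, hk, hkeq⟩ := hprim.eq_pow_of_pow_eq_one (hpow1 v)
      exact ⟨k, hk, hkeq⟩
    refine ⟨fun v => Classical.choose (hex v) + 1, ?_, ?_⟩
    · intro v
      have h1 := (Classical.choose_spec (hex v)).1
      show 1 ≤ Classical.choose (hex v) + 1 ∧ Classical.choose (hex v) + 1 ≤ m
      omega
    · intro e he
      by_contra hco
      push_neg at hco
      have hucst : ∀ a ∈ e, ∀ b ∈ e, u a = u b := by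
        intro a ha b hb
        have heq : Classical.choose (hex a) + 1 = Classical.choose (hex b) + 1 :=
          hco a ha b hb
        have hk : Classical.choose (hex a) = Classical.choose (hex b) := by omega
        have sa := (Classical.choose_spec (hex a)).2
        have sb := (Classical.choose_spec (hex b)).2
        rw [hk] at sa
        exact mul_right_cancel₀ (inv_ne_zero (hune 0)) (sa.symm.trans sb)
      have hcard : e.card = m := G.uniform e he
      have hv0 : e.Nonempty := Finset.card_pos.mp
        (by rw [hcard]; exact Nat.pos_of_ne_zero (NeZero.ne m))
      obtain ⟨v0, hv0e⟩ := hv0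
      have hprod : ∏ w ∈ e, u w = u v0 ^ m := by
        rw [Finset.prod_congr rfl (fun w hw => hucst w hw v0 hv0e), Finset.prod_const, hcard]
      have h2 := hedgeP e he v0 hv0e
      rw [hprod] at h2
      have h3 : (1 : ℂ) * u v0 ^ m = rot ℓ * u v0 ^ m := by rw [one_mul]; exact h2
      exact StmtAux.rot_ne_one hℓ (mul_right_cancel₀ (pow_ne_zero m (hune v0)) h3).symm
  · refine ⟨fun _ => 1, fun v => ⟨le_rfl, Nat.one_le_iff_ne_zero.mpr (NeZero.ne m)⟩, ?_⟩
    intro e he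
    exact absurd ⟨e, he⟩ hne
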